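/- Let T be a spanning tree of the star graph G_k with dist_T(r,v) = dist_{G_k}(r,v) for all v. Then in T, each c vertex and each d vertex has exactly one T-neighbor, which is some b vertex, and for any c vertex c_S and any i ∈ S, dist_T(c_S, d_i) = 2 if c_S and d_i have the same b-parent in T, and dist_T(c_S, d_i) = 4 otherwise; in particular dist_T(c_S,d_i) ∈ {2,4} while dist_{G_k}(c_S,d_i) = 1. -/

import Mathlib

open SimpleGraph

namespace StarAux
variable {V : Type*} {G : SimpleGraph V}

lemma walk_len1 {u v : V} (w : G.Walk u v) (h : w.length = 1) : G.Adj u v := by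
  cases w with
  | nil => simp at h
  | cons ha w' =>
    cases w' with
    | nil => exact ha
    | cons _ _ => simp [SimpleGraph.Walk.length_cons] at h

lemma walk_len2 {u v : V} (w : G.Walk u v) (h : w.length = 2) :
    ∃ x, G.Adj u x ∧ G.Adj x v := by
  cases w with
  | nil => simp at h
  | cons ha w' => exact ⟨_, ha, walk_len1 w' (by simpa using h)⟩

lemma walk_len3 {u v : V} (w : G.Walk u v) (h : w.length = 3) :
    ∃ x y, G.Adj u x ∧ G.Adj x y ∧ G.Adj y v := by
  cases w with
  | nil => simp at h
  | cons ha w' =>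
    obtain ⟨y, h1, h2⟩ := walk_len2 w' (by simpa using h)
    exact ⟨_, y, ha, h1, h2⟩

lemma isPath1 {a b : V} (h1 : G.Adj a b) :
    (SimpleGraph.Walk.cons h1 SimpleGraph.Walk.nil).IsPath := by
  simp [SimpleGraph.Walk.isPath_def, h1.ne]

lemma isPath2 {a b c : V} (h1 : G.Adj a b) (h2 : G.Adj b c) (hac : a ≠ c) :
    (SimpleGraph.Walk.cons h1 (SimpleGraph.Walk.cons h2 SimpleGraph.Walk.nil)).IsPath := by
  simp [SimpleGraph.Walk.isPath_def, h1.ne, h2.ne, hac]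

lemma isPath3 {a b c d : V} (h1 : G.Adj a b) (h2 : G.Adj b c) (h3 : G.Adj c d)
    (hac : a ≠ c) (had : a ≠ d) (hbd : b ≠ d) :
    (SimpleGraph.Walk.cons h1 (SimpleGraph.Walk.cons h2
      (SimpleGraph.Walk.cons h3 SimpleGraph.Walk.nil))).IsPath := by
  simp [SimpleGraph.Walk.isPath_def, h1.ne, h2.ne, h3.ne, hac, had, hbd]

lemma walk_unique (hac : G.IsAcyclic) {u v : V} {p q : G.Walk u v}
    (hp : p.IsPath) (hq : q.IsPath) : p = q := by
  have := hac.path_unique ⟨p, hp⟩ ⟨q, hq⟩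
  exact congrArg Subtype.val this

lemma length_unique (hac : G.IsAcyclic) {u v : V} {p q : G.Walk u v}
    (hp : p.IsPath) (hq : q.IsPath) : p.length = q.length :=
  congrArg _ (walk_unique hac hp hq)

end StarAux

/-- Vertices of the star graph G_k: the root `r`, the clique vertices
`b i` and `d i` for i < 2^k, and, for every dyadic interval of {0,...,2^k-1}
(given by a level `t ≤ k` and an index `j < 2^t`), a vertex `c t j`. -/
inductive SVtx (k : ℕ) : Type
  | r : SVtx k
  | b : Fin (2 ^ k) → SVtx k
  | d : Fin (2 ^ k) → SVtx k
  | c : (t : Fin (k + 1)) → Fin (2 ^ (t : ℕ)) → SVtx k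

/-- r is adjacent to all b's; the b's and d's together form a clique;
`c t j` is adjacent exactly to the b_i and d_i with i in the dyadic interval
{ i | i / 2^(k-t) = j }. -/
def starRel (k : ℕ) : SVtx k → SVtx k → Prop
  | .r, .b _ => True
  | .b _, .b _ => True
  | .d _, .d _ => True
  | .b _, .d _ => True
  | .c t j, .b i => (i : ℕ) / 2 ^ (k - (t : ℕ)) = (j : ℕ)
  | .c t j, .d i => (i : ℕ) / 2 ^ (k - (t : ℕ)) = (j : ℕ)
  | _, _ => False

def starG (k : ℕ) : SimpleGraph (SVtx k) := SimpleGraph.fromRel (starRel k)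

namespace StarAux
variable {k : ℕ}

lemma adj_rb (i : Fin (2 ^ k)) : (starG k).Adj .r (.b i) := by
  rw [starG, SimpleGraph.fromRel_adj]
  exact ⟨by simp, Or.inl trivial⟩

lemma adj_bd (i i' : Fin (2 ^ k)) : (starG k).Adj (.b i) (.d i') := by
  rw [starG, SimpleGraph.fromRel_adj]
  exact ⟨by simp, Or.inl trivial⟩

lemma adj_cb (t : Fin (k + 1)) (j : Fin (2 ^ (t : ℕ))) (i : Fin (2 ^ k))
    (h : (i : ℕ) / 2 ^ (k - (t : ℕ)) = (j : ℕ)) : (starG k).Adj (.c t j) (.b i) := by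
  rw [starG, SimpleGraph.fromRel_adj]
  exact ⟨by simp, Or.inl h⟩

lemma adj_cd (t : Fin (k + 1)) (j : Fin (2 ^ (t : ℕ))) (i : Fin (2 ^ k))
    (h : (i : ℕ) / 2 ^ (k - (t : ℕ)) = (j : ℕ)) : (starG k).Adj (.c t j) (.d i) := by
  rw [starG, SimpleGraph.fromRel_adj]
  exact ⟨by simp, Or.inl h⟩

lemma adj_r (u : SVtx k) (h : (starG k).Adj .r u) : ∃ p, u = .b p := by
  rw [starG, SimpleGraph.fromRel_adj] at h
  obtain ⟨hne, h | h⟩ := h <;> cases u with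
  | r => exact absurd rfl hne
  | b p => exact ⟨p, rfl⟩
  | d i => exact h.elim
  | c t j => exact h.elim

lemma interval_wit (t : Fin (k + 1)) (j : Fin (2 ^ (t : ℕ))) :
    ∃ i : Fin (2 ^ k), (i : ℕ) / 2 ^ (k - (t : ℕ)) = (j : ℕ) := by
  have htk : (t : ℕ) ≤ k := Nat.lt_succ_iff.mp t.isLt
  have hpos : 0 < 2 ^ (k - (t : ℕ)) := Nat.pow_pos (by norm_num)
  refine ⟨⟨(j : ℕ) * 2 ^ (k - (t : ℕ)), ?_⟩, ?_⟩
  · calc (j : ℕ) * 2 ^ (k - (t : ℕ)) < 2 ^ (t : ℕ) * 2 ^ (k - (t : ℕ)) :=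
        (Nat.mul_lt_mul_right hpos).mpr j.isLt
      _ = 2 ^ k := by rw [← pow_add]; congr 1; omega
  · simp [Nat.mul_div_cancel _ hpos]

end StarAux

open StarAux

/-- In any distance-from-r-preserving (fast connecting) spanning tree T of the
star graph G_k: every d vertex and every c vertex has a unique T-neighbor, which
is a b vertex; and for a c vertex c_S (S the dyadic set at level t index j) and
any i ∈ S, dist_T(c_S, d_i) = 2 if they share their b-parent in T and = 4
otherwise — while dist_G(c_S, d_i) = 1. -/
theorem stmt12 :
    ∀ k : ℕ, ∀ T : SimpleGraph (SVtx k),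
      T ≤ starG k → T.Connected → T.IsAcyclic →
      (∀ v : SVtx k, T.dist .r v = (starG k).dist .r v) →
      (∀ i, ∃ p, ∀ u, T.Adj (.d i) u ↔ u = .b p) ∧
      (∀ (t : Fin (k + 1)) (j : Fin (2 ^ (t : ℕ))),
        ∃ p, ∀ u, T.Adj (.c t j) u ↔ u = .b p) ∧
      (∀ (t : Fin (k + 1)) (j : Fin (2 ^ (t : ℕ))) (i : Fin (2 ^ k)),
        (i : ℕ) / 2 ^ (k - (t : ℕ)) = (j : ℕ) →
        ((∃ p, T.Adj (.c t j) (.b p) ∧ T.Adj (.d i) (.b p)) →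
          T.dist (.c t j) (.d i) = 2) ∧
        ((¬ ∃ p, T.Adj (.c t j) (.b p) ∧ T.Adj (.d i) (.b p)) →
          T.dist (.c t j) (.d i) = 4) ∧
        (starG k).dist (.c t j) (.d i) = 1) := by
  intro k T hle hconn hacyc hdist
  -- distances in G from r
  have hGb : ∀ i, (starG k).dist .r (.b i) = 1 :=
    fun i => SimpleGraph.dist_eq_one_iff_adj.mpr (adj_rb i)
  have hGd : ∀ i : Fin (2 ^ k), (starG k).dist .r (.d i) = 2 := by
    intro i
    have hle2 : (starG k).dist .r (.d i) ≤ 2 := by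
      have := SimpleGraph.dist_le
        (SimpleGraph.Walk.cons (adj_rb i) (SimpleGraph.Walk.cons (adj_bd i i) SimpleGraph.Walk.nil))
      simpa using this
    have h0 : (starG k).dist .r (.d i) ≠ 0 := by
      intro h
      have := ((hconn .r (.d i)).mono hle).dist_eq_zero_iff.mp h
      exact nomatch this
    have h1 : (starG k).dist .r (.d i) ≠ 1 := by
      intro h
      obtain ⟨p, hp⟩ := adj_r _ (SimpleGraph.dist_eq_one_iff_adj.mp h)
      exact nomatch hp
    omega
  have hGc : ∀ (t : Fin (k + 1)) (j : Fin (2 ^ (t : ℕ))),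
      (starG k).dist .r (.c t j) = 2 := by
    intro t j
    obtain ⟨i, hi⟩ := interval_wit t j
    have hle2 : (starG k).dist .r (.c t j) ≤ 2 := by
      have := SimpleGraph.dist_le
        (SimpleGraph.Walk.cons (adj_rb i)
          (SimpleGraph.Walk.cons (adj_cb t j i hi).symm SimpleGraph.Walk.nil))
      simpa using this
    have h0 : (starG k).dist .r (.c t j) ≠ 0 := by
      intro h
      have := ((hconn .r (.c t j)).mono hle).dist_eq_zero_iff.mp h
      exact nomatch this
    have h1 : (starG k).dist .r (.c t j) ≠ 1 := by
      intro h
      obtain ⟨p, hp⟩ := adj_r _ (SimpleGraph.dist_eq_one_iff_adj.mp h)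
      exact nomatch hp
    omega
  -- distances in T from r
  have hTle2 : ∀ u : SVtx k, T.dist .r u ≤ 2 := by
    intro u
    rw [hdist]
    cases u with
    | r => rw [SimpleGraph.dist_self]; omega
    | b i => rw [hGb]; omega
    | d i => rw [hGd]
    | c t j => rw [hGc]
  have adj_of_dist1 : ∀ u : SVtx k, T.dist .r u = 1 → T.Adj .r u := by
    intro u h
    obtain ⟨w, hw⟩ := hconn.exists_walk_length_eq_dist .r u
    exact walk_len1 w (hw.trans h)
  -- the parent lemma
  have parent : ∀ v : SVtx k, T.dist .r v = 2 → (∀ p, v ≠ SVtx.b p) →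
      ∃ p, T.Adj .r (.b p) ∧ (∀ u, T.Adj v u ↔ u = .b p) := by
    intro v hv2 hvb
    have hvr : v ≠ .r := by
      rintro rfl
      rw [(hconn .r .r).dist_eq_zero_iff.mpr rfl] at hv2
      exact absurd hv2 (by norm_num)
    obtain ⟨w, hw⟩ := hconn.exists_walk_length_eq_dist .r v
    obtain ⟨m, h1, h2⟩ := walk_len2 w (hw.trans hv2)
    obtain ⟨p, rfl⟩ := adj_r m (hle h1)
    refine ⟨p, h1, fun u => ⟨?_, fun h => h ▸ h2.symm⟩⟩
    intro hu
    have hur : u ≠ .r := by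
      rintro rfl
      obtain ⟨q, hq⟩ := adj_r v (hle hu.symm)
      exact hvb q hq
    have hne2 : T.dist .r u ≠ 2 := by
      intro h2'
      obtain ⟨w', hw'⟩ := hconn.exists_walk_length_eq_dist .r u
      obtain ⟨m', a1, a2⟩ := walk_len2 w' (hw'.trans h2')
      have hmv : m' ≠ v := by
        rintro rfl
        have : T.dist .r m' ≤ 1 := by
          have := SimpleGraph.dist_le (SimpleGraph.Walk.cons a1 SimpleGraph.Walk.nil)
          simpa using this
        omega
      have huv : u ≠ v := hu.ne'
      have hP := isPath2 h1 h2 (Ne.symm hvr)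
      have hQ := isPath3 a1 a2 hu.symm (Ne.symm hur) (Ne.symm hvr) hmv
      have := length_unique hacyc hP hQ
      simp [SimpleGraph.Walk.length_cons] at this
    have h0 : T.dist .r u ≠ 0 := by
      intro h
      exact hur ((hconn .r u).dist_eq_zero_iff.mp h).symm
    have hd1 : T.dist .r u = 1 := by have := hTle2 u; omega
    have hadj := adj_of_dist1 u hd1
    obtain ⟨q, rfl⟩ := adj_r u (hle hadj)
    have hP := isPath2 h1 h2 (Ne.symm hvr)
    have hQ := isPath2 hadj hu.symm (Ne.symm hvr)
    have heq := walk_unique hacyc hQ hP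
    have := congrArg (fun w => w.getVert 1) heq
    simp [SimpleGraph.Walk.getVert] at this
    rw [this]
  -- parents of d's and c's
  have hTd : ∀ i : Fin (2 ^ k), T.dist .r (.d i) = 2 := fun i => (hdist _).trans (hGd i)
  have hTc : ∀ t j, T.dist .r (.c t j) = 2 := fun t j => (hdist _).trans (hGc t j)
  have parentD : ∀ i : Fin (2 ^ k),
      ∃ p, T.Adj .r (.b p) ∧ (∀ u, T.Adj (.d i) u ↔ u = .b p) :=
    fun i => parent (.d i) (hTd i) (fun p h => nomatch h)
  have parentC : ∀ (t : Fin (k + 1)) (j : Fin (2 ^ (t : ℕ))),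
      ∃ p, T.Adj .r (.b p) ∧ (∀ u, T.Adj (.c t j) u ↔ u = .b p) :=
    fun t j => parent (.c t j) (hTc t j) (fun p h => nomatch h)
  refine ⟨fun i => ⟨(parentD i).choose, (parentD i).choose_spec.2⟩,
    fun t j => ⟨(parentC t j).choose, (parentC t j).choose_spec.2⟩, ?_⟩
  intro t j i hij
  obtain ⟨p, hrp, hp⟩ := parentC t j
  obtain ⟨q, hrq, hq⟩ := parentD i
  have hcb : T.Adj (.c t j) (.b p) := (hp _).mpr rfl
  have hdb : T.Adj (.d i) (.b q) := (hq _).mpr rfl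
  have hcd : SVtx.c t j ≠ SVtx.d i := fun h => nomatch h
  have h0 : T.dist (.c t j) (.d i) ≠ 0 := by
    intro h
    exact hcd ((hconn _ _).dist_eq_zero_iff.mp h)
  have h1 : T.dist (.c t j) (.d i) ≠ 1 := by
    intro h
    have := (hp _).mp (SimpleGraph.dist_eq_one_iff_adj.mp h)
    exact nomatch this
  refine ⟨?_, ?_, ?_⟩
  · rintro ⟨p', hc', hd'⟩
    have e1 : SVtx.b p' = SVtx.b p := (hp _).mp hc'
    have e2 : SVtx.b p' = SVtx.b q := (hq _).mp hd'
    have hpe : SVtx.b q = SVtx.b p := e2 ▸ e1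
    have hle2 : T.dist (.c t j) (.d i) ≤ 2 := by
      have := SimpleGraph.dist_le
        (SimpleGraph.Walk.cons hcb (SimpleGraph.Walk.cons (hpe ▸ hdb.symm) SimpleGraph.Walk.nil))
      simpa using this
    omega
  · intro hnot
    have hpq : SVtx.b p ≠ SVtx.b q := by
      intro h
      exact hnot ⟨p, hcb, h ▸ hdb⟩
    have hle4 : T.dist (.c t j) (.d i) ≤ 4 := by
      have := SimpleGraph.dist_le
        (SimpleGraph.Walk.cons hcb (SimpleGraph.Walk.cons hrp.symm
          (SimpleGraph.Walk.cons hrq (SimpleGraph.Walk.cons hdb.symm SimpleGraph.Walk.nil))))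
      simpa using this
    have h2 : T.dist (.c t j) (.d i) ≠ 2 := by
      intro h
      obtain ⟨w, hw⟩ := hconn.exists_walk_length_eq_dist (.c t j) (.d i)
      obtain ⟨x, a1, a2⟩ := walk_len2 w (hw.trans h)
      have e1 : x = SVtx.b p := (hp _).mp a1
      have e2 : x = SVtx.b q := (hq _).mp a2.symm
      exact hpq (e1 ▸ e2)
    have h3 : T.dist (.c t j) (.d i) ≠ 3 := by
      intro h
      obtain ⟨w, hw⟩ := hconn.exists_walk_length_eq_dist (.c t j) (.d i)
      obtain ⟨x, y, a1, a2, a3⟩ := walk_len3 w (hw.trans h)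
      have e1 : x = SVtx.b p := (hp _).mp a1
      have e2 : y = SVtx.b q := (hq _).mp a3.symm
      subst e1; subst e2
      -- T.Adj (b p) (b q), plus T.Adj r (b p), T.Adj r (b q): two paths r → b q
      have hP := isPath1 hrq
      have hQ := isPath2 hrp a2 (fun h => nomatch h)
      have := length_unique hacyc hP hQ
      simp [SimpleGraph.Walk.length_cons] at this
    omega
  · exact SimpleGraph.dist_eq_one_iff_adj.mpr (adj_cd t j i hij)
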